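/- In the Knapsack-to-DTAL construction (n+1 images over locations {t, p, q} with S_i(t) = 0 for all i; S_i(p) = v(i) > 0 and S_i(q) = −w(i) with w(i) > 0 for i ≤ n; S_{n+1}(p) = −V with V > 0 and S_{n+1}(q) = W with W > 0), every nonempty kept subset A' ⊆ {1,…,n+1} satisfying ∑_{i ∈ A'} S_i(t) ≤ ∑_{i ∈ A'} S_i(q) must contain the image n+1; equivalently, no feasible deletion set for the DTAL instance can delete image n+1. -/
import Mathlib


/-- Structural step in the proof of Lemma 1: in the Knapsack-to-DTAL construction
(locations `Fin 3` with `0 = t`, `1 = p`, `2 = q`), every nonempty kept subset `A'`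
on which the total `q`-score is at least the total `t`-score must contain the final
image `n+1`; equivalently, no feasible deletion set may delete image `n+1`. -/
theorem dtal_last_image_kept (n : ℕ) (v w : Fin n → ℝ)
    (hv : ∀ i, 0 < v i) (hw : ∀ i, 0 < w i) (W V : ℝ) (hW : 0 < W) (hV : 0 < V)
    (S : Fin (n + 1) → Fin 3 → ℝ)
    (hSt : ∀ i, S i 0 = 0)
    (hSp : ∀ i : Fin n, S i.castSucc 1 = v i)
    (hSq : ∀ i : Fin n, S i.castSucc 2 = -(w i))
    (hlp : S (Fin.last n) 1 = -V)
    (hlq : S (Fin.last n) 2 = W)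
    (A' : Finset (Fin (n + 1))) (hA : A'.Nonempty)
    (hq : (∑ i ∈ A', S i 0) ≤ ∑ i ∈ A', S i 2) :
    Fin.last n ∈ A' := by
  by_contra h
  have h0 : (∑ i ∈ A', S i 0) = 0 := Finset.sum_eq_zero (fun i _ => hSt i)
  have hneg : (∑ i ∈ A', S i 2) < 0 := by
    apply Finset.sum_neg (fun i hi => ?_) hA
    obtain ⟨j, rfl⟩ := Fin.exists_castSucc_eq.mpr (fun e : i = Fin.last n => h (e ▸ hi))
    rw [hSq]
    linarith [hw j]
  linarith
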